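/- arXiv:1712.10024 — 4 statements merged into one kernel-verified Lean document; each statement's English description precedes it below -/
import Mathlib

section
/- Let Y_L ≤ Y ≤ Y_U a.s. be real random variables, V an ℝ^d-valued random variable, and Σ an invertible d×d matrix, all with finite second moments. Define the identified set 𝓑 = {Σ⁻¹ E[V Y'] : Y' measurable with Y_L ≤ Y' ≤ Y_U a.s.}. Then for every unit vector q ∈ S^{d-1}, the support function σ(q,𝓑) = sup_{b ∈ 𝓑} ⟪q, b⟫ equals E[z_q · (Y_L + (Y_U − Y_L)·1{z_q > 0})], where z_q = ⟪q, Σ⁻¹ V⟫, provided P(z_q = 0) = 0. -/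
open MeasureTheory Matrix
open scoped Classical

/-- Support-function representation of the identified set: for the identified set
`𝓑 = {Σ⁻¹ E[V Y'] : Y' measurable, Y_L ≤ Y' ≤ Y_U a.s.}` and a unit direction `q`,
the support function `σ(q,𝓑) = sup_{b ∈ 𝓑} ⟪q, b⟫` equals
`E[z_q (Y_L + (Y_U − Y_L) 1{z_q > 0})]` where `z_q = ⟪q, Σ⁻¹ V⟫`,
provided `P(z_q = 0) = 0`. -/
theorem stmt_0 {Ω : Type*} [MeasurableSpace Ω] (μ : Measure Ω) [IsProbabilityMeasure μ]
    (d : ℕ) (V : Ω → Fin d → ℝ) (Y YL YU : Ω → ℝ)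
    (S : Matrix (Fin d) (Fin d) ℝ) (hS : IsUnit S)
    (hmV : Measurable V) (hmY : Measurable Y) (hmL : Measurable YL) (hmU : Measurable YU)
    (hbound : ∀ᵐ ω ∂μ, YL ω ≤ Y ω ∧ Y ω ≤ YU ω)
    (hint : ∀ Y' : Ω → ℝ, Measurable Y' →
      (∀ᵐ ω ∂μ, YL ω ≤ Y' ω ∧ Y' ω ≤ YU ω) → Integrable (fun ω => Y' ω • V ω) μ)
    (q : Fin d → ℝ) (hq : ∑ i, (q i) ^ 2 = 1)
    (hz0 : μ {ω | q ⬝ᵥ S⁻¹.mulVec (V ω) = 0} = 0)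
    (hrhs : Integrable (fun ω => (q ⬝ᵥ S⁻¹.mulVec (V ω)) *
      (YL ω + (YU ω - YL ω) * (if 0 < q ⬝ᵥ S⁻¹.mulVec (V ω) then (1:ℝ) else 0))) μ) :
    sSup {r : ℝ | ∃ Y' : Ω → ℝ, Measurable Y' ∧
        (∀ᵐ ω ∂μ, YL ω ≤ Y' ω ∧ Y' ω ≤ YU ω) ∧
        r = q ⬝ᵥ S⁻¹.mulVec (∫ ω, Y' ω • V ω ∂μ)}
      = ∫ ω, (q ⬝ᵥ S⁻¹.mulVec (V ω)) *
          (YL ω + (YU ω - YL ω) * (if 0 < q ⬝ᵥ S⁻¹.mulVec (V ω) then (1:ℝ) else 0)) ∂μ := by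
  set z : Ω → ℝ := fun ω => q ⬝ᵥ S⁻¹.mulVec (V ω) with hzdef
  let L : (Fin d → ℝ) →L[ℝ] ℝ :=
    LinearMap.toContinuousLinearMap
      { toFun := fun b => q ⬝ᵥ S⁻¹.mulVec b
        map_add' := fun x y => by simp [Matrix.mulVec_add, dotProduct_add]
        map_smul' := fun c x => by simp [Matrix.mulVec_smul, dotProduct_smul] }
  have hL : ∀ b, L b = q ⬝ᵥ S⁻¹.mulVec b := fun b => rfl
  have hzm : Measurable z := by
    have hc : Continuous fun b : Fin d → ℝ => q ⬝ᵥ S⁻¹.mulVec b := by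
      have := L.continuous
      exact this
    exact hc.measurable.comp hmV
  set Ystar : Ω → ℝ := fun ω => if 0 < z ω then YU ω else YL ω with hYsdef
  have hmYs : Measurable Ystar :=
    Measurable.ite (measurableSet_lt measurable_const hzm) hmU hmL
  have hLU : ∀ᵐ ω ∂μ, YL ω ≤ YU ω := hbound.mono fun ω h => h.1.trans h.2
  have hYsb : ∀ᵐ ω ∂μ, YL ω ≤ Ystar ω ∧ Ystar ω ≤ YU ω := hLU.mono fun ω h => by
    by_cases hc : 0 < z ω <;> simp [Ystar, hc, h]
  have hiden : ∀ ω, z ω * (YL ω + (YU ω - YL ω) * (if 0 < z ω then (1:ℝ) else 0))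
      = z ω * Ystar ω := by
    intro ω; by_cases hc : 0 < z ω <;> simp [Ystar, hc] <;> ring
  have key : ∀ Y' : Ω → ℝ, Measurable Y' → (∀ᵐ ω ∂μ, YL ω ≤ Y' ω ∧ Y' ω ≤ YU ω) →
      (Integrable (fun ω => z ω * Y' ω) μ ∧
       q ⬝ᵥ S⁻¹.mulVec (∫ ω, Y' ω • V ω ∂μ) = ∫ ω, z ω * Y' ω ∂μ) := by
    intro Y' hm hb
    have hI := hint Y' hm hb
    have heq : (fun ω => L (Y' ω • V ω)) = fun ω => z ω * Y' ω := by
      funext ω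
      simp [hL, Matrix.mulVec_smul, dotProduct_smul, smul_eq_mul, mul_comm]
      exact Or.inl rfl
    refine ⟨heq ▸ L.integrable_comp hI, ?_⟩
    have h2 := L.integral_comp_comm hI
    rw [heq] at h2
    rw [← hL]
    exact h2.symm
  have hIs := key Ystar hmYs hYsb
  have hRHS : (∫ ω, z ω * (YL ω + (YU ω - YL ω) * (if 0 < z ω then (1:ℝ) else 0)) ∂μ)
      = ∫ ω, z ω * Ystar ω ∂μ := integral_congr_ae (Filter.Eventually.of_forall hiden)
  refine IsGreatest.csSup_eq ⟨?_, ?_⟩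
  · exact ⟨Ystar, hmYs, hYsb, by rw [hIs.2, hRHS]⟩
  · rintro r ⟨Y', hm, hb, rfl⟩
    rw [(key Y' hm hb).2, hRHS]
    refine integral_mono_ae (key Y' hm hb).1 hIs.1 ?_
    filter_upwards [hb] with ω h
    by_cases hc : 0 < z ω
    · simp only [Ystar, if_pos hc]
      exact mul_le_mul_of_nonneg_left h.2 hc.le
    · simp only [Ystar, if_neg hc]
      exact mul_le_mul_of_nonpos_left h.1 (not_lt.mp hc)
end

section
/- (Orthogonality of the doubly-robust moment for a conditional expectation nuisance.) Let W = (U, X, Z) be random variables, m(W, η) a moment function affine in a real nuisance η = η(X) whose true value is η₀(X) = E[U | X], and define γ₀(X) = ∂_η E[m(W, η₀)|X]. Set g(W, ξ) = m(W, η) + γ(X)(U − η(X)) with ξ = (η, γ). Then the Gateaux derivative of ξ ↦ E[g(W, ξ)] at ξ₀ = (η₀, γ₀) is zero in every square-integrable direction (η − η₀, γ − γ₀). -/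
open MeasureTheory

private lemma l2_integrable_mul {Ω : Type*} {m0 : MeasurableSpace Ω} {μ : Measure Ω}
    {f g : Ω → ℝ} (hf : MemLp f 2 μ) (hg : MemLp g 2 μ) :
    Integrable (fun ω => f ω * g ω) μ := by
  have h := L2.integrable_inner (𝕜 := ℝ) (hf.toLp f) (hg.toLp g)
  refine h.congr ?_
  filter_upwards [hf.coeFn_toLp, hg.coeFn_toLp] with ω h1 h2
  simp [h1, h2, RCLike.inner_apply, mul_comm]

private lemma memℒp_two_condexp {Ω : Type*} {m m0 : MeasurableSpace Ω} (hm : m ≤ m0)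
    {μ : Measure Ω} [IsProbabilityMeasure μ] {f : Ω → ℝ} (hf : MemLp f 2 μ) :
    MemLp (μ[f|m]) 2 μ := by
  have hae : ((condExpL2 ℝ ℝ hm (hf.toLp f) : Ω →₂[μ] ℝ) : Ω → ℝ) =ᵐ[μ] μ[f|m] := by
    refine ae_eq_condExp_of_forall_setIntegral_eq hm (hf.integrable one_le_two)
      (fun s _ hμs => integrableOn_condExpL2_of_measure_ne_top hm hμs.ne _)
      (fun s hs hμs => ?_) (aestronglyMeasurable_condExpL2 hm _)
    rw [integral_condExpL2_eq hm (hf.toLp f) hs hμs.ne]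
    exact setIntegral_congr_ae (hm s hs) (hf.coeFn_toLp.mono fun x hx _ => hx)
  exact (Lp.memLp _).ae_eq hae

private lemma integral_mul_condexp {Ω : Type*} {m m0 : MeasurableSpace Ω} (hm : m ≤ m0)
    {μ : Measure Ω} [IsProbabilityMeasure μ] {f g : Ω → ℝ}
    (hfm : StronglyMeasurable[m] f) (hf2 : MemLp f 2 μ) (hg2 : MemLp g 2 μ) :
    ∫ ω, f ω * g ω ∂μ = ∫ ω, f ω * (μ[g|m]) ω ∂μ := by
  have hfg : Integrable (f * g) μ := l2_integrable_mul hf2 hg2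
  have h := condExp_mul_of_stronglyMeasurable_left hfm hfg (hg2.integrable one_le_two)
  calc ∫ ω, f ω * g ω ∂μ = ∫ ω, (f * g) ω ∂μ := rfl
    _ = ∫ ω, (μ[f * g|m]) ω ∂μ := (integral_condExp hm (f := f * g)).symm
    _ = ∫ ω, (f * μ[g|m]) ω ∂μ := integral_congr_ae h
    _ = ∫ ω, f ω * (μ[g|m]) ω ∂μ := rfl

/-- Orthogonality of the doubly-robust moment for a conditional-expectation nuisance:
for a moment function `m(W, t) = a(W) + b(W) t` affine in the scalar nuisance value `t`,
with true nuisance `η₀(X) = E[U|X]` and `γ₀(X) = ∂_η E[m(W,η₀)|X] = E[b|X]`, the map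
`ξ = (η, γ) ↦ E[m(W, η(X)) + γ(X)(U − η(X))]` has zero Gateaux derivative at
`ξ₀ = (η₀, γ₀)` in every square-integrable `m`-measurable direction `(η − η₀, γ − γ₀)`. -/
theorem stmt_4 {Ω : Type*} {m m0 : MeasurableSpace Ω} (hm : m ≤ m0)
    (μ : Measure Ω) [IsProbabilityMeasure μ]
    (U a b : Ω → ℝ) (mfun : Ω → ℝ → ℝ)
    (haff : ∀ ω t, mfun ω t = a ω + b ω * t)
    (hU2 : MemLp U 2 μ) (ha1 : Integrable a μ) (hb2 : MemLp b 2 μ)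
    (η γ : Ω → ℝ)
    (hηm : Measurable[m] η) (hγm : Measurable[m] γ)
    (hη2 : MemLp η 2 μ) (hγ2 : MemLp γ 2 μ) :
    HasDerivAt (fun r : ℝ =>
        ∫ ω, (mfun ω ((μ[U | m]) ω + r * (η ω - (μ[U | m]) ω))
          + ((μ[b | m]) ω + r * (γ ω - (μ[b | m]) ω)) *
              (U ω - ((μ[U | m]) ω + r * (η ω - (μ[U | m]) ω)))) ∂μ)
      0 0 := by
  set E : Ω → ℝ := μ[U|m] with hE
  set B : Ω → ℝ := μ[b|m] with hB
  have hE2 : MemLp E 2 μ := memℒp_two_condexp hm hU2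
  have hB2 : MemLp B 2 μ := memℒp_two_condexp hm hb2
  have hEm : StronglyMeasurable[m] E := stronglyMeasurable_condExp
  have hBm : StronglyMeasurable[m] B := stronglyMeasurable_condExp
  -- the three coefficient functions
  set P : Ω → ℝ := fun ω => a ω + b ω * E ω + B ω * (U ω - E ω) with hP
  set Q : Ω → ℝ := fun ω => (b ω - B ω) * (η ω - E ω) + (γ ω - B ω) * (U ω - E ω) with hQ
  set R : Ω → ℝ := fun ω => -((γ ω - B ω) * (η ω - E ω)) with hR
  have hPint : Integrable P μ :=
    (ha1.add (l2_integrable_mul hb2 hE2)).add (l2_integrable_mul hB2 (hU2.sub hE2))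
  have hQint : Integrable Q μ :=
    (l2_integrable_mul (hb2.sub hB2) (hη2.sub hE2)).add
      (l2_integrable_mul (hγ2.sub hB2) (hU2.sub hE2))
  have hRint : Integrable R μ :=
    (l2_integrable_mul (hγ2.sub hB2) (hη2.sub hE2)).neg
  -- orthogonality: ∫ Q = 0
  have hΔηm : StronglyMeasurable[m] (fun ω => η ω - E ω) :=
    (hηm.stronglyMeasurable).sub hEm
  have hΔγm : StronglyMeasurable[m] (fun ω => γ ω - B ω) :=
    (hγm.stronglyMeasurable).sub hBm
  have h1 : ∫ ω, (η ω - E ω) * b ω ∂μ = ∫ ω, (η ω - E ω) * B ω ∂μ :=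
    integral_mul_condexp hm hΔηm (hη2.sub hE2) hb2
  have h2 : ∫ ω, (γ ω - B ω) * U ω ∂μ = ∫ ω, (γ ω - B ω) * E ω ∂μ :=
    integral_mul_condexp hm hΔγm (hγ2.sub hB2) hU2
  have hQ0 : ∫ ω, Q ω ∂μ = 0 := by
    have e1 : ∀ ω, Q ω = ((η ω - E ω) * b ω - (η ω - E ω) * B ω)
        + ((γ ω - B ω) * U ω - (γ ω - B ω) * E ω) := by
      intro ω; simp only [hQ]; ring
    rw [integral_congr_ae (Filter.Eventually.of_forall e1)]
    rw [integral_add, integral_sub, integral_sub, h1, h2]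
    · ring
    · exact l2_integrable_mul (hγ2.sub hB2) hU2
    · exact l2_integrable_mul (hγ2.sub hB2) hE2
    · exact l2_integrable_mul (hη2.sub hE2) hb2
    · exact l2_integrable_mul (hη2.sub hE2) hB2
    · exact (l2_integrable_mul (hη2.sub hE2) hb2).sub (l2_integrable_mul (hη2.sub hE2) hB2)
    · exact (l2_integrable_mul (hγ2.sub hB2) hU2).sub (l2_integrable_mul (hγ2.sub hB2) hE2)
  -- rewrite the integral as a polynomial in r
  have key : (fun r : ℝ =>
        ∫ ω, (mfun ω (E ω + r * (η ω - E ω))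
          + (B ω + r * (γ ω - B ω)) * (U ω - (E ω + r * (η ω - E ω)))) ∂μ)
      = fun r : ℝ => (∫ ω, P ω ∂μ) + (r * (∫ ω, Q ω ∂μ) + r ^ 2 * (∫ ω, R ω ∂μ)) := by
    funext r
    have e2 : ∀ ω, mfun ω (E ω + r * (η ω - E ω))
        + (B ω + r * (γ ω - B ω)) * (U ω - (E ω + r * (η ω - E ω)))
        = P ω + (r * Q ω + r ^ 2 * R ω) := by
      intro ω; rw [haff]; simp only [hP, hQ, hR]; ring
    rw [integral_congr_ae (Filter.Eventually.of_forall e2)]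
    have hg : Integrable (fun ω => r * Q ω + r ^ 2 * R ω) μ :=
      (hQint.const_mul r).add (hRint.const_mul (r ^ 2))
    rw [integral_add hPint hg,
      integral_add (hQint.const_mul r) (hRint.const_mul (r ^ 2)),
      integral_const_mul, integral_const_mul]
  rw [key]
  have hd1 : HasDerivAt (fun r : ℝ => r * (∫ ω, Q ω ∂μ)) (∫ ω, Q ω ∂μ) 0 := by
    simpa using (hasDerivAt_id (0 : ℝ)).mul_const (∫ ω, Q ω ∂μ)
  have hd2 : HasDerivAt (fun r : ℝ => r ^ 2 * (∫ ω, R ω ∂μ)) 0 0 := by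
    simpa using (hasDerivAt_pow 2 (0 : ℝ)).mul_const (∫ ω, R ω ∂μ)
  have := (hd1.add hd2).const_add (∫ ω, P ω ∂μ)
  simpa [hQ0] using this
end

section
/- (Lee-bound representation.) Let D ∈ {0,1}, S ∈ {0,1}, Y real, X random, with 0 < P(D=1|X) < 1 a.s. and P(D=0, S=1) > 0. Let s(d,x) = P(S=1|D=d,X=x), p₀(x) = s(0,x)/s(1,x) ∈ (0,1], and let y_{u,x} denote the conditional u-quantile of Y given D=1, S=1, X=x (with Y conditionally continuous). Then ∫ f(x|D=0,S=1) E[Y | D=1, S=1, Y ≤ y_{p₀(x),x}, X=x] dx = E[ D·S·Y·1{Y ≤ y_{p₀(X),X}}·P(D=0|X) / (P(D=0,S=1)·P(D=1|X)) ]. -/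
open MeasureTheory
open scoped Classical

/-- Lee-bound representation: with binary treatment indicator `ID`, binary selection
indicator `IS`, outcome `Y`, covariates `X`, propensity `π(x) = P(D=1|X=x)` strictly
between 0 and 1, selection probabilities `s(d,x)`, trimming proportion
`p₀(x) = s(0,x)/s(1,x)`, conditional `p₀(x)`-quantile `yq(x)` of `Y` given
`D=1, S=1, X=x`, truncated conditional mean `mq(x) = E[Y 1{Y ≤ yq(x)}|D=1,S=1,X=x]`,
`T(x) = E[Y|D=1,S=1,Y ≤ yq(x),X=x] = mq(x)/p₀(x)`, and `fX` the density (w.r.t. `ν`)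
of `X` given `D=0, S=1`:
`∫ fX(x) T(x) dν(x) = E[ D S Y 1{Y ≤ yq(X)} P(D=0|X) / (P(D=0,S=1) P(D=1|X)) ]`. -/
theorem stmt_12 {Ω 𝒳 : Type*} [MeasurableSpace Ω] [MeasurableSpace 𝒳]
    (μ : Measure Ω) [IsProbabilityMeasure μ] (ν : Measure 𝒳) [SigmaFinite ν]
    (X : Ω → 𝒳) (ID IS Y : Ω → ℝ)
    (π s0 s1 p0 yq fX T mq : 𝒳 → ℝ) (P01 : ℝ)
    (hmX : Measurable X) (hmY : Measurable Y)
    (hmπ : Measurable π) (hms0 : Measurable s0) (hms1 : Measurable s1)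
    (hmyq : Measurable yq) (hmT : Measurable T) (hmmq : Measurable mq)
    (hID : ∀ ω, ID ω = 0 ∨ ID ω = 1) (hIS : ∀ ω, IS ω = 0 ∨ IS ω = 1)
    (hπ : ∀ x, 0 < π x ∧ π x < 1)
    (hs1 : ∀ x, 0 < s1 x)
    (hp0 : ∀ x, p0 x = s0 x / s1 x) (hp0' : ∀ x, 0 < p0 x ∧ p0 x ≤ 1)
    (hYbd : ∃ C, ∀ ω, |Y ω| ≤ C) (hTbd : ∃ C, ∀ x, |T x| ≤ C)
    (hmqbd : ∃ C, ∀ x, |mq x| ≤ C)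
    (hP01 : P01 = ∫ ω, (1 - ID ω) * IS ω ∂μ) (hP01pos : 0 < P01)
    -- conditional-probability (tower) identities given `X`:
    (hD1S1 : ∀ g : 𝒳 → ℝ, Measurable g → (∃ C, ∀ x, |g x| ≤ C) →
      ∫ ω, ID ω * IS ω * g (X ω) ∂μ = ∫ ω, π (X ω) * s1 (X ω) * g (X ω) ∂μ)
    (hD0S1 : ∀ g : 𝒳 → ℝ, Measurable g → (∃ C, ∀ x, |g x| ≤ C) →
      ∫ ω, (1 - ID ω) * IS ω * g (X ω) ∂μ
        = ∫ ω, (1 - π (X ω)) * s0 (X ω) * g (X ω) ∂μ)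
    -- `yq(x)` is the conditional `p₀(x)`-quantile of `Y` given `D=1, S=1, X=x`:
    (hquant : ∀ g : 𝒳 → ℝ, Measurable g → (∃ C, ∀ x, |g x| ≤ C) →
      ∫ ω, ID ω * IS ω * (if Y ω ≤ yq (X ω) then (1:ℝ) else 0) * g (X ω) ∂μ
        = ∫ ω, ID ω * IS ω * p0 (X ω) * g (X ω) ∂μ)
    -- `mq(x)` is the truncated conditional mean of `Y` given `D=1, S=1, X=x`:
    (hmq : ∀ g : 𝒳 → ℝ, Measurable g → (∃ C, ∀ x, |g x| ≤ C) →
      ∫ ω, ID ω * IS ω * Y ω * (if Y ω ≤ yq (X ω) then (1:ℝ) else 0) * g (X ω) ∂μ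
        = ∫ ω, ID ω * IS ω * mq (X ω) * g (X ω) ∂μ)
    (hT : ∀ x, T x = mq x / p0 x)
    -- `fX` is the `ν`-density of `X` given `D=0, S=1`:
    (hfX : ∀ g : 𝒳 → ℝ, Measurable g → (∃ C, ∀ x, |g x| ≤ C) →
      ∫ ω, (1 - ID ω) * IS ω * g (X ω) ∂μ = P01 * ∫ x, g x * fX x ∂ν)
    (hintLHS : Integrable (fun x => fX x * T x) ν)
    (hintRHS : Integrable (fun ω => ID ω * IS ω * Y ω *
      (if Y ω ≤ yq (X ω) then (1:ℝ) else 0) * (1 - π (X ω))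
        / (P01 * π (X ω))) μ) :
    ∫ x, fX x * T x ∂ν
      = ∫ ω, ID ω * IS ω * Y ω * (if Y ω ≤ yq (X ω) then (1:ℝ) else 0) *
          (1 - π (X ω)) / (P01 * π (X ω)) ∂μ := by
  classical
  obtain ⟨CT, hCT⟩ := hTbd
  obtain ⟨Cm, hCm⟩ := hmqbd
  have hP01ne : P01 ≠ 0 := hP01pos.ne'
  have hπpos : ∀ x, 0 < π x := fun x => (hπ x).1
  have hπlt : ∀ x, 0 < 1 - π x := fun x => by linarith [(hπ x).2]
  -- auxiliary functions
  set g : 𝒳 → ℝ := fun x => (1 - π x) / (P01 * π x) with hg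
  set k : ℕ → 𝒳 → ℝ := fun n x => min 1 ((n : ℝ) * P01 * π x / (1 - π x)) with hk
  have hmk : ∀ n, Measurable (k n) := by
    intro n
    exact measurable_const.min
      ((measurable_const.mul hmπ).div (measurable_const.sub hmπ))
  have hk0 : ∀ n x, 0 ≤ k n x := by
    intro n x
    have := hπpos x; have := hπlt x
    exact le_min zero_le_one (by positivity)
  have hk1 : ∀ n x, k n x ≤ 1 := fun n x => min_le_left _ _
  have hkabs : ∀ n x, |k n x| ≤ 1 := fun n x =>
    abs_le.2 ⟨by linarith [hk0 n x], hk1 n x⟩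
  have hgk : ∀ n x, g x * k n x = min (g x) (n : ℝ) := by
    intro n x
    have h1 : g x * ((n : ℝ) * P01 * π x / (1 - π x)) = (n : ℝ) := by
      have hπne : π x ≠ 0 := (hπpos x).ne'
      have h1ne : (1 - π x) ≠ 0 := (hπlt x).ne'
      simp only [hg]
      field_simp
    have h0 : 0 ≤ g x := by
      have := hπpos x; have := hπlt x
      positivity
    rw [mul_min_of_nonneg _ _ h0, mul_one, h1]
  -- key chain for each n
  have key : ∀ n : ℕ,
      ∫ ω, (ID ω * IS ω * Y ω * (if Y ω ≤ yq (X ω) then (1:ℝ) else 0) *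
          (1 - π (X ω)) / (P01 * π (X ω))) * k n (X ω) ∂μ
        = ∫ x, fX x * T x * k n x ∂ν := by
    intro n
    set h : 𝒳 → ℝ := fun x => g x * k n x with hh
    have hmh : Measurable h := by
      have hmg : Measurable g :=
        (measurable_const.sub hmπ).div (measurable_const.mul hmπ)
      exact hmg.mul (hmk n)
    have hhb : ∃ C, ∀ x, |h x| ≤ C := by
      refine ⟨(n : ℝ), fun x => ?_⟩
      have h0 : 0 ≤ g x := by
        have := hπpos x; have := hπlt x; positivity
      have : h x = min (g x) (n : ℝ) := hgk n x
      rw [this, abs_le]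
      constructor
      · have : (0:ℝ) ≤ min (g x) (n : ℝ) := le_min h0 (Nat.cast_nonneg n)
        linarith
      · exact min_le_right _ _
    -- step 1: rewrite integrand
    have step1 : ∫ ω, (ID ω * IS ω * Y ω * (if Y ω ≤ yq (X ω) then (1:ℝ) else 0) *
          (1 - π (X ω)) / (P01 * π (X ω))) * k n (X ω) ∂μ
        = ∫ ω, ID ω * IS ω * Y ω * (if Y ω ≤ yq (X ω) then (1:ℝ) else 0) *
            h (X ω) ∂μ := by
      refine integral_congr_ae (Filter.Eventually.of_forall fun ω => ?_)
      simp only [hh, hg]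
      ring
    -- step 2: truncated mean identity
    have step2 := hmq h hmh hhb
    -- step 3: pull into D=1,S=1 tower
    have step3 : ∫ ω, ID ω * IS ω * mq (X ω) * h (X ω) ∂μ
        = ∫ ω, π (X ω) * s1 (X ω) * (mq (X ω) * h (X ω)) ∂μ := by
      have := hD1S1 (fun x => mq x * h x) (hmmq.mul hmh)
        ⟨Cm * (n : ℝ), fun x => by
          obtain ⟨C, hC⟩ := hhb
          calc |mq x * h x| = |mq x| * |h x| := abs_mul _ _
            _ ≤ Cm * (n : ℝ) := by
                have h1 := hCm x
                have h2 : |h x| ≤ (n : ℝ) := by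
                  have : h x = min (g x) (n : ℝ) := hgk n x
                  have h0 : 0 ≤ g x := by
                    have := hπpos x; have := hπlt x; positivity
                  rw [this, abs_le]
                  exact ⟨by
                    have : (0:ℝ) ≤ min (g x) (n : ℝ) := le_min h0 (Nat.cast_nonneg n)
                    linarith, min_le_right _ _⟩
                have h3 : (0:ℝ) ≤ |mq x| := abs_nonneg _
                have h4 : (0:ℝ) ≤ |h x| := abs_nonneg _
                nlinarith [hCm x]⟩
      calc ∫ ω, ID ω * IS ω * mq (X ω) * h (X ω) ∂μ
          = ∫ ω, ID ω * IS ω * (mq (X ω) * h (X ω)) ∂μ := by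
            refine integral_congr_ae (Filter.Eventually.of_forall fun ω => ?_); ring
        _ = ∫ ω, π (X ω) * s1 (X ω) * (mq (X ω) * h (X ω)) ∂μ := this
    -- pointwise algebraic identity on 𝒳
    have ptw : ∀ x, π x * s1 x * (mq x * h x)
        = (1 - π x) * s0 x * (T x * k n x / P01) := by
      intro x
      have hs1ne : s1 x ≠ 0 := (hs1 x).ne'
      have hp0ne : p0 x ≠ 0 := (hp0' x).1.ne'
      have hmqx : mq x = T x * p0 x := by
        rw [hT x]; field_simp
      have hs0x : s0 x = p0 x * s1 x := by
        have := hp0 x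
        field_simp at this
        linarith [this]
      have hπne : π x ≠ 0 := (hπpos x).ne'
      simp only [hh, hg, hmqx, hs0x]
      field_simp
    have step4 : ∫ ω, π (X ω) * s1 (X ω) * (mq (X ω) * h (X ω)) ∂μ
        = ∫ ω, (1 - π (X ω)) * s0 (X ω) * (T (X ω) * k n (X ω) / P01) ∂μ :=
      integral_congr_ae (Filter.Eventually.of_forall fun ω => ptw (X ω))
    -- step 5: back through D=0,S=1 tower
    have hgg : Measurable (fun x => T x * k n x / P01) :=
      (hmT.mul (hmk n)).div measurable_const
    have hggb : ∃ C, ∀ x, |(fun x => T x * k n x / P01) x| ≤ C := by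
      refine ⟨|CT| / P01, fun x => ?_⟩
      simp only [abs_div, abs_mul, abs_of_pos hP01pos]
      have h1 : |T x| * |k n x| ≤ |CT| := by
        have := hCT x
        have := hkabs n x
        nlinarith [abs_nonneg (T x), abs_nonneg (k n x), le_abs_self CT]
      exact div_le_div_of_nonneg_right h1 hP01pos.le
    have step5 := (hD0S1 (fun x => T x * k n x / P01) hgg hggb).symm
    -- step 6: density
    have step6 := hfX (fun x => T x * k n x / P01) hgg hggb
    -- step 7: simplify
    have step7 : P01 * ∫ x, (T x * k n x / P01) * fX x ∂ν
        = ∫ x, fX x * T x * k n x ∂ν := by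
      rw [← integral_const_mul]
      refine integral_congr_ae (Filter.Eventually.of_forall fun x => ?_)
      field_simp
    rw [step1, step2, step3, step4, step5, step6, step7]
  -- limit on the Ω side
  set r : Ω → ℝ := fun ω => ID ω * IS ω * Y ω *
      (if Y ω ≤ yq (X ω) then (1:ℝ) else 0) * (1 - π (X ω)) / (P01 * π (X ω))
    with hr
  have hklim : ∀ x, Filter.Tendsto (fun n : ℕ => k n x) Filter.atTop (nhds 1) := by
    intro x
    have hπx := hπpos x
    have h1x := hπlt x
    obtain ⟨N, hN⟩ := exists_nat_ge ((1 - π x) / (P01 * π x))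
    have hev : ∀ᶠ n : ℕ in Filter.atTop, k n x = 1 := by
      refine Filter.eventually_atTop.2 ⟨N, fun n hn => ?_⟩
      have hge : (1 - π x) / (P01 * π x) ≤ (n : ℝ) :=
        le_trans hN (by exact_mod_cast hn)
      have hpos : 0 < P01 * π x := by positivity
      have h1 : (1:ℝ) ≤ (n : ℝ) * P01 * π x / (1 - π x) := by
        rw [le_div_iff₀ h1x, one_mul]
        rw [div_le_iff₀ hpos] at hge
        linarith
      simp only [hk]
      exact min_eq_left h1
    exact Filter.Tendsto.congr' (hev.mono fun n h => h.symm) tendsto_const_nhds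
  have tendΩ : Filter.Tendsto (fun n : ℕ => ∫ ω, r ω * k n (X ω) ∂μ)
      Filter.atTop (nhds (∫ ω, r ω ∂μ)) := by
    refine tendsto_integral_of_dominated_convergence (fun ω => |r ω|)
      (fun n => hintRHS.aestronglyMeasurable.mul
        (((hmk n).comp hmX).aestronglyMeasurable))
      hintRHS.abs (fun n => Filter.Eventually.of_forall fun ω => ?_)
      (Filter.Eventually.of_forall fun ω => ?_)
    · rw [Real.norm_eq_abs, abs_mul]
      have := hkabs n (X ω)
      nlinarith [abs_nonneg (r ω), abs_nonneg (k n (X ω))]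
    · have := (hklim (X ω)).const_mul (r ω)
      simpa using this
  -- limit on the 𝒳 side
  have tendX : Filter.Tendsto (fun n : ℕ => ∫ x, fX x * T x * k n x ∂ν)
      Filter.atTop (nhds (∫ x, fX x * T x ∂ν)) := by
    refine tendsto_integral_of_dominated_convergence (fun x => |fX x * T x|)
      (fun n => hintLHS.aestronglyMeasurable.mul ((hmk n).aestronglyMeasurable))
      hintLHS.abs (fun n => Filter.Eventually.of_forall fun x => ?_)
      (Filter.Eventually.of_forall fun x => ?_)
    · rw [Real.norm_eq_abs, abs_mul]
      have := hkabs n x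
      nlinarith [abs_nonneg (fX x * T x), abs_nonneg (k n x)]
    · have := (hklim x).const_mul (fX x * T x)
      simpa using this
  have : Filter.Tendsto (fun n : ℕ => ∫ ω, r ω * k n (X ω) ∂μ)
      Filter.atTop (nhds (∫ x, fX x * T x ∂ν)) := by
    exact tendX.congr fun n => (key n).symm
  exact tendsto_nhds_unique this tendΩ
end

section
/- (Support function of the one-dimensional identified interval.) Let V be a real random variable with P(V = 0) = 0 and E[V²] = σ² > 0, and let Y_L ≤ Y_U be integrable with VY_L, VY_U integrable. Define 𝓑 = {σ⁻² E[V Y'] : Y_L ≤ Y' ≤ Y_U a.s.}. Then 𝓑 = [β_L, β_U] where β_U = σ⁻² E[V(Y_L + (Y_U−Y_L)1{V>0})] and β_L = σ⁻² E[V(Y_L + (Y_U−Y_L)1{V<0})], and β_L ≤ β_U. -/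
open MeasureTheory
open scoped Classical

lemma aux_integrable_sel {Ω : Type*} [MeasurableSpace Ω] (μ : Measure Ω)
    {V YL YU Y' : Ω → ℝ} (hmV : Measurable V) (hmY : Measurable Y')
    (hintL : Integrable (fun ω => V ω * YL ω) μ)
    (hintU : Integrable (fun ω => V ω * YU ω) μ)
    (hc : ∀ᵐ ω ∂μ, YL ω ≤ Y' ω ∧ Y' ω ≤ YU ω) :
    Integrable (fun ω => V ω * Y' ω) μ := by
  refine Integrable.mono' (hintL.abs.add hintU.abs)
    (hmV.mul hmY).aestronglyMeasurable ?_
  filter_upwards [hc] with ω hω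
  obtain ⟨h1, h2⟩ := hω
  have hy : |Y' ω| ≤ |YL ω| + |YU ω| :=
    (abs_le_max_abs_abs h1 h2).trans
      (max_le (le_add_of_nonneg_right (abs_nonneg _))
        (le_add_of_nonneg_left (abs_nonneg _)))
  calc ‖V ω * Y' ω‖ = |V ω| * |Y' ω| := abs_mul _ _
    _ ≤ |V ω| * (|YL ω| + |YU ω|) := mul_le_mul_of_nonneg_left hy (abs_nonneg _)
    _ = |V ω * YL ω| + |V ω * YU ω| := by rw [mul_add, abs_mul, abs_mul]

/-- Support function of the one-dimensional identified interval: with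
`P(V = 0) = 0` and `σ² = E[V²] > 0`, the identified set
`𝓑 = {σ⁻² E[V Y'] : Y_L ≤ Y' ≤ Y_U a.s.}` is the closed interval `[β_L, β_U]` where
`β_U = σ⁻² E[V (Y_L + (Y_U − Y_L)1{V>0})]`, `β_L = σ⁻² E[V (Y_L + (Y_U − Y_L)1{V<0})]`,
and `β_L ≤ β_U`. -/
theorem stmt_14 {Ω : Type*} [MeasurableSpace Ω] (μ : Measure Ω) [IsProbabilityMeasure μ]
    (V YL YU : Ω → ℝ)
    (hmV : Measurable V) (hmL : Measurable YL) (hmU : Measurable YU)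
    (hz0 : μ {ω | V ω = 0} = 0)
    (hV2 : Integrable (fun ω => V ω ^ 2) μ)
    (hσ : 0 < ∫ ω, V ω ^ 2 ∂μ)
    (hLU : ∀ᵐ ω ∂μ, YL ω ≤ YU ω)
    (hintL : Integrable (fun ω => V ω * YL ω) μ)
    (hintU : Integrable (fun ω => V ω * YU ω) μ) :
    {r : ℝ | ∃ Y' : Ω → ℝ, Measurable Y' ∧
        (∀ᵐ ω ∂μ, YL ω ≤ Y' ω ∧ Y' ω ≤ YU ω) ∧
        r = (∫ ω, V ω ^ 2 ∂μ)⁻¹ * ∫ ω, V ω * Y' ω ∂μ}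
      = Set.Icc
        ((∫ ω, V ω ^ 2 ∂μ)⁻¹ *
          ∫ ω, V ω * (YL ω + (YU ω - YL ω) * (if V ω < 0 then (1:ℝ) else 0)) ∂μ)
        ((∫ ω, V ω ^ 2 ∂μ)⁻¹ *
          ∫ ω, V ω * (YL ω + (YU ω - YL ω) * (if 0 < V ω then (1:ℝ) else 0)) ∂μ)
    ∧ (∫ ω, V ω ^ 2 ∂μ)⁻¹ *
          ∫ ω, V ω * (YL ω + (YU ω - YL ω) * (if V ω < 0 then (1:ℝ) else 0)) ∂μ
        ≤ (∫ ω, V ω ^ 2 ∂μ)⁻¹ *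
          ∫ ω, V ω * (YL ω + (YU ω - YL ω) * (if 0 < V ω then (1:ℝ) else 0)) ∂μ := by
  set gmin : Ω → ℝ := fun ω => YL ω + (YU ω - YL ω) * (if V ω < 0 then (1:ℝ) else 0)
    with hgmin
  set gmax : Ω → ℝ := fun ω => YL ω + (YU ω - YL ω) * (if 0 < V ω then (1:ℝ) else 0)
    with hgmax
  have hc : (0:ℝ) ≤ (∫ ω, V ω ^ 2 ∂μ)⁻¹ := inv_nonneg.mpr hσ.le
  have hmmin : Measurable gmin :=
    hmL.add ((hmU.sub hmL).mul
      (Measurable.ite (measurableSet_lt hmV measurable_const) measurable_const measurable_const))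
  have hmmax : Measurable gmax :=
    hmL.add ((hmU.sub hmL).mul
      (Measurable.ite (measurableSet_lt measurable_const hmV) measurable_const measurable_const))
  have hcmin : ∀ᵐ ω ∂μ, YL ω ≤ gmin ω ∧ gmin ω ≤ YU ω := by
    filter_upwards [hLU] with ω hω
    simp only [hgmin]
    split_ifs <;> constructor <;> nlinarith
  have hcmax : ∀ᵐ ω ∂μ, YL ω ≤ gmax ω ∧ gmax ω ≤ YU ω := by
    filter_upwards [hLU] with ω hω
    simp only [hgmax]
    split_ifs <;> constructor <;> nlinarith
  have hImin : Integrable (fun ω => V ω * gmin ω) μ :=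
    aux_integrable_sel μ hmV hmmin hintL hintU hcmin
  have hImax : Integrable (fun ω => V ω * gmax ω) μ :=
    aux_integrable_sel μ hmV hmmax hintL hintU hcmax
  -- key: for any selection, integral bounded between
  have hub : ∀ Y' : Ω → ℝ, Measurable Y' →
      (∀ᵐ ω ∂μ, YL ω ≤ Y' ω ∧ Y' ω ≤ YU ω) →
      (∫ ω, V ω * Y' ω ∂μ) ≤ ∫ ω, V ω * gmax ω ∂μ := by
    intro Y' hmY hcs
    refine integral_mono_ae (aux_integrable_sel μ hmV hmY hintL hintU hcs) hImax ?_
    filter_upwards [hcs] with ω hω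
    obtain ⟨h1, h2⟩ := hω
    simp only [hgmax]
    split_ifs with h
    · nlinarith [mul_nonneg h.le (sub_nonneg.mpr h2)]
    · push_neg at h
      nlinarith [mul_nonneg (neg_nonneg.mpr h) (sub_nonneg.mpr h1)]
  have hlb : ∀ Y' : Ω → ℝ, Measurable Y' →
      (∀ᵐ ω ∂μ, YL ω ≤ Y' ω ∧ Y' ω ≤ YU ω) →
      (∫ ω, V ω * gmin ω ∂μ) ≤ ∫ ω, V ω * Y' ω ∂μ := by
    intro Y' hmY hcs
    refine integral_mono_ae hImin (aux_integrable_sel μ hmV hmY hintL hintU hcs) ?_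
    filter_upwards [hcs] with ω hω
    obtain ⟨h1, h2⟩ := hω
    simp only [hgmin]
    split_ifs with h
    · nlinarith [mul_nonneg (neg_nonneg.mpr h.le) (sub_nonneg.mpr h2)]
    · push_neg at h
      nlinarith [mul_nonneg h (sub_nonneg.mpr h1)]
  have hle : (∫ ω, V ω ^ 2 ∂μ)⁻¹ * ∫ ω, V ω * gmin ω ∂μ
      ≤ (∫ ω, V ω ^ 2 ∂μ)⁻¹ * ∫ ω, V ω * gmax ω ∂μ :=
    mul_le_mul_of_nonneg_left (hlb gmax hmmax hcmax) hc
  refine ⟨?_, hle⟩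
  ext r
  simp only [Set.mem_setOf_eq, Set.mem_Icc]
  constructor
  · rintro ⟨Y', hmY, hcs, rfl⟩
    exact ⟨mul_le_mul_of_nonneg_left (hlb Y' hmY hcs) hc,
      mul_le_mul_of_nonneg_left (hub Y' hmY hcs) hc⟩
  · rintro ⟨hl, hu⟩
    set βL : ℝ := (∫ ω, V ω ^ 2 ∂μ)⁻¹ * ∫ ω, V ω * gmin ω ∂μ with hβL
    set βU : ℝ := (∫ ω, V ω ^ 2 ∂μ)⁻¹ * ∫ ω, V ω * gmax ω ∂μ with hβU
    by_cases heq : βU = βL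
    · have hr : r = βL := le_antisymm (heq ▸ hu) hl
      exact ⟨gmin, hmmin, hcmin, by rw [hr, hβL]⟩
    · have hlt : βL < βU := lt_of_le_of_ne hle fun h => heq h.symm
      set t : ℝ := (r - βL) / (βU - βL) with ht
      have ht0 : 0 ≤ t := div_nonneg (by linarith) (by linarith)
      have ht1 : t ≤ 1 := (div_le_one (by linarith)).mpr (by linarith)
      have htr : βL + t * (βU - βL) = r := by
        rw [ht, div_mul_cancel₀ _ (by linarith : βU - βL ≠ 0)]; ring
      refine ⟨fun ω => (1 - t) * gmin ω + t * gmax ω,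
        ((measurable_const.mul hmmin).add (measurable_const.mul hmmax)), ?_, ?_⟩
      · filter_upwards [hcmin, hcmax] with ω h1 h2
        obtain ⟨h1a, h1b⟩ := h1
        obtain ⟨h2a, h2b⟩ := h2
        constructor
        · nlinarith [mul_le_mul_of_nonneg_left h1a (by linarith : (0:ℝ) ≤ 1 - t),
            mul_le_mul_of_nonneg_left h2a ht0]
        · nlinarith [mul_le_mul_of_nonneg_left h1b (by linarith : (0:ℝ) ≤ 1 - t),
            mul_le_mul_of_nonneg_left h2b ht0]
      · have hfun : (fun ω => V ω * ((1 - t) * gmin ω + t * gmax ω))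
            = fun ω => (1 - t) * (V ω * gmin ω) + t * (V ω * gmax ω) := by
          funext ω; ring
        rw [hfun, integral_add (hImin.const_mul _) (hImax.const_mul _),
          integral_const_mul, integral_const_mul]
        rw [hβL, hβU] at htr
        linarith [htr]
end
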